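/- Entropy formula under the inverse-cdf change of variables: if f : [−R₁,R₁] → (0,∞) is continuous with ∫_{−R₁}^{R₁} f = m, M(v) = ∫_{−R₁}^v f, and u = M^{−1} : [0,m] → [−R₁,R₁], then ∫_{−R₁}^{R₁} (v²/2 · f(v) + Φ(f(v))) dv = ∫₀^m (u(x)²/2 + Ψ(u'(x))) dx, where Ψ(s) = sΦ(1/s). -/

import Mathlib

open MeasureTheory Real Set intervalIntegral

lemma aux_log_int_le_one {t : ℝ} (ht : 0 < t) (ht1 : t ≤ 1) :
    IntervalIntegrable Real.log volume 0 t := by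
  have hderiv : ∀ x ∈ Ioo (0:ℝ) t,
      HasDerivAt (fun x => x - x * Real.log x) (-Real.log x) x := by
    intro x hx
    have h := (hasDerivAt_id x).sub (Real.hasDerivAt_mul_log hx.1.ne')
    exact h.congr_deriv (by ring)
  have hcont : ContinuousOn (fun x => x - x * Real.log x) (Icc 0 t) :=
    (continuous_id.sub Real.continuous_mul_log).continuousOn
  have hnn : ∀ x ∈ Ioo (0:ℝ) t, 0 ≤ -Real.log x := by
    intro x hx
    simpa using Real.log_nonpos hx.1.le (hx.2.le.trans ht1)
  have hI := integrableOn_deriv_of_nonneg hcont hderiv hnn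
  rw [intervalIntegrable_iff_integrableOn_Ioc_of_le ht.le]
  have h2 : IntegrableOn (fun x => -(-Real.log x)) (Ioc (0:ℝ) t) volume := hI.neg
  exact h2.congr_fun (fun x _ => by simp) measurableSet_Ioc

lemma aux_log_int {t : ℝ} (ht : 0 < t) :
    IntervalIntegrable Real.log volume 0 t := by
  rcases le_or_gt t 1 with h1 | h1
  · exact aux_log_int_le_one ht h1
  · exact (aux_log_int_le_one one_pos le_rfl).trans
      (intervalIntegrable_log (by
        rw [Set.uIcc_of_le h1.le]; intro h; exact absurd h.1 (by norm_num)))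

lemma aux_h_int {γ t : ℝ} (hγ : 0 < γ) (ht : 0 < t) :
    IntervalIntegrable (fun s => Real.log (s ^ γ / (1 + s ^ γ))) volume 0 t := by
  have hrpow : Continuous fun s : ℝ => s ^ γ := by
    rw [continuous_iff_continuousAt]
    intro x
    rcases eq_or_ne x 0 with rfl | hx
    · exact Real.continuousAt_rpow_const 0 γ (Or.inr hγ.le)
    · exact Real.continuousAt_rpow_const x γ (Or.inl hx)
  have h1 : IntervalIntegrable (fun s => γ * Real.log s) volume 0 t :=
    (aux_log_int ht).const_mul γ
  have h2 : IntervalIntegrable (fun s => Real.log (1 + s ^ γ)) volume 0 t := by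
    apply ContinuousOn.intervalIntegrable
    apply ContinuousOn.log ((continuous_const.add hrpow).continuousOn)
    intro s hs
    rw [Set.uIcc_of_le ht.le] at hs
    have : (0:ℝ) ≤ s ^ γ := Real.rpow_nonneg hs.1 γ
    exact (by linarith : (0:ℝ) < 1 + s ^ γ).ne'
  have h3 := h1.sub h2
  rw [intervalIntegrable_iff_integrableOn_Ioc_of_le ht.le] at h3 ⊢
  apply h3.congr_fun _ measurableSet_Ioc
  intro s hs
  have hs0 : (0:ℝ) < s := hs.1
  have hp : (0:ℝ) < s ^ γ := Real.rpow_pos_of_pos hs0 γ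
  show γ * Real.log s - Real.log (1 + s ^ γ) = Real.log (s ^ γ / (1 + s ^ γ))
  rw [Real.log_div hp.ne' (by positivity), Real.log_rpow hs0]

lemma aux_phi_cont {γ : ℝ} (hγ : 0 < γ) :
    ContinuousOn (fun t => (1 / γ) *
      ∫ s in (0:ℝ)..t, Real.log (s ^ γ / (1 + s ^ γ))) (Set.Ioi 0) := by
  set h : ℝ → ℝ := fun s => Real.log (s ^ γ / (1 + s ^ γ)) with hh
  have hrpow : Continuous fun s : ℝ => s ^ γ := by
    rw [continuous_iff_continuousAt]
    intro x
    rcases eq_or_ne x 0 with rfl | hx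
    · exact Real.continuousAt_rpow_const 0 γ (Or.inr hγ.le)
    · exact Real.continuousAt_rpow_const x γ (Or.inl hx)
  have hmeas : Measurable h := by
    apply Real.measurable_log.comp
    exact (hrpow.measurable).div (measurable_const.add hrpow.measurable)
  apply ContinuousOn.mul continuousOn_const
  intro t ht
  have ht0 : (0:ℝ) < t := ht
  have hcont : ContinuousAt h t := by
    have hp : (0:ℝ) < t ^ γ := Real.rpow_pos_of_pos ht0 γ
    have hq : (0:ℝ) < 1 + t ^ γ := by positivity
    apply ContinuousAt.comp (Real.continuousAt_log (by positivity))
    exact (hrpow.continuousAt).div (continuous_const.add hrpow).continuousAt hq.ne'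
  have hd := integral_hasDerivAt_right (aux_h_int hγ ht0)
    (hmeas.stronglyMeasurable.stronglyMeasurableAtFilter) hcont
  exact hd.continuousAt.continuousWithinAt

theorem stmt_17 (γ R₁ m : ℝ) (hγ : 0 < γ) (hR₁ : 0 < R₁) (hm : 0 < m)
    (Φ Ψ : ℝ → ℝ)
    (hΦ : ∀ f : ℝ, Φ f = (1 / γ) * ∫ s in (0:ℝ)..f, Real.log (s ^ γ / (1 + s ^ γ)))
    (hΨ : ∀ s : ℝ, 0 < s → Ψ s = s * Φ (1 / s))
    (f : ℝ → ℝ) (hf : ContinuousOn f (Set.Icc (-R₁) R₁))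
    (hfpos : ∀ v ∈ Set.Icc (-R₁) R₁, 0 < f v)
    (hmass : ∫ v in (-R₁)..R₁, f v = m)
    (M : ℝ → ℝ) (hM : ∀ v, M v = ∫ w in (-R₁)..v, f w)
    (u : ℝ → ℝ)
    (huM : ∀ x ∈ Set.Icc 0 m, M (u x) = x)
    (hMu : ∀ v ∈ Set.Icc (-R₁) R₁, u (M v) = v)
    (hmono : StrictMonoOn u (Set.Icc 0 m))
    (hu' : ∀ x ∈ Set.Icc 0 m, HasDerivAt u (1 / f (u x)) x) :
    ∫ v in (-R₁)..R₁, (v ^ 2 / 2 * f v + Φ (f v)) =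
      ∫ x in (0:ℝ)..m, ((u x) ^ 2 / 2 + Ψ (deriv u x)) := by
  have hRR : -R₁ ≤ R₁ := by linarith
  have hRmem : -R₁ ∈ Set.Icc (-R₁) R₁ := ⟨le_rfl, hRR⟩
  have hRmem' : R₁ ∈ Set.Icc (-R₁) R₁ := ⟨hRR, le_rfl⟩
  -- endpoints of u
  have hu0 : u 0 = -R₁ := by
    have h0 : M (-R₁) = 0 := by rw [hM]; exact intervalIntegral.integral_same
    have := hMu (-R₁) hRmem
    rwa [h0] at this
  have hum : u m = R₁ := by
    have h0 : M R₁ = m := by rw [hM]; exact hmass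
    have := hMu R₁ hRmem'
    rwa [h0] at this
  -- u maps [0,m] into [-R₁,R₁]
  have humaps : ∀ x ∈ Set.Icc 0 m, u x ∈ Set.Icc (-R₁) R₁ := by
    intro x hx
    constructor
    · rw [← hu0]
      exact hmono.monotoneOn ⟨le_rfl, hm.le⟩ hx hx.1
    · rw [← hum]
      exact hmono.monotoneOn hx ⟨hm.le, le_rfl⟩ hx.2
  -- f(u x) positive
  have hfu : ∀ x ∈ Set.Icc 0 m, 0 < f (u x) := fun x hx => hfpos _ (humaps x hx)
  set G : ℝ → ℝ := fun v => v ^ 2 / 2 * f v + Φ (f v) with hG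
  -- u is continuous on [0,m]
  have hucont : ContinuousOn u (Set.Icc 0 m) := fun x hx =>
    (hu' x hx).continuousAt.continuousWithinAt
  -- continuity of G on [-R₁, R₁]
  have hΦcont : ContinuousOn Φ (Set.Ioi 0) := by
    have := aux_phi_cont hγ
    have heq : Φ = fun t => (1 / γ) * ∫ s in (0:ℝ)..t, Real.log (s ^ γ / (1 + s ^ γ)) :=
      funext hΦ
    rwa [heq]
  have hGcont : ContinuousOn G (Set.Icc (-R₁) R₁) := by
    apply ContinuousOn.add
    · exact (continuousOn_id.pow 2 |>.div_const 2).mul hf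
    · exact hΦcont.comp hf fun v hv => hfpos v hv
  -- rewrite the right-hand side
  have hrw : ∫ x in (0:ℝ)..m, ((u x) ^ 2 / 2 + Ψ (deriv u x)) =
      ∫ x in (0:ℝ)..m, (1 / f (u x)) • (G ∘ u) x := by
    apply intervalIntegral.integral_congr
    intro x hx
    rw [Set.uIcc_of_le hm.le] at hx
    have hfx := hfu x hx
    have hd : deriv u x = 1 / f (u x) := (hu' x hx).deriv
    have hΨx : Ψ (1 / f (u x)) = (1 / f (u x)) * Φ (f (u x)) := by
      rw [hΨ _ (by positivity), one_div_one_div]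
    show u x ^ 2 / 2 + Ψ (deriv u x) = (1 / f (u x)) • (G ∘ u) x
    rw [hd, hΨx]
    simp only [Function.comp_apply, smul_eq_mul, hG]
    rw [mul_add, mul_comm (u x ^ 2 / 2) (f (u x)), ← mul_assoc, one_div,
      inv_mul_cancel₀ hfx.ne', one_mul]
  rw [hrw]
  have hsubst := intervalIntegral.integral_comp_smul_deriv'
    (f := u) (f' := fun x => 1 / f (u x)) (g := G) (a := 0) (b := m)
    (by
      intro x hx
      rw [Set.uIcc_of_le hm.le] at hx
      exact hu' x hx)
    (by
      rw [Set.uIcc_of_le hm.le]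
      apply ContinuousOn.div continuousOn_const (hf.comp hucont humaps)
      intro x hx
      exact (hfu x hx).ne')
    (by
      apply hGcont.mono
      rw [Set.uIcc_of_le hm.le]
      intro v hv
      obtain ⟨x, hx, rfl⟩ := hv
      exact humaps x hx)
  rw [hsubst, hu0, hum]
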